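/- arXiv:2509.07444 — 4 statements merged into one kernel-verified Lean document; each statement's English description precedes it below -/
import Mathlib

section
/- Let C ⊆ ℝ^d be a finite nonempty set, and for x ∈ ℝ^d let C(x) denote a point of C at minimum Euclidean distance from x. Then for all points p, c* ∈ ℝ^d and every real r ≥ ‖p − c*‖, it holds that ‖C(p) − c*‖ ≤ 4·max{r, ‖c* − C(c*)‖}. -/
open MeasureTheory ProbabilityTheory Metric
open scoped ENNReal NNReal Classical

noncomputable def gaussianJL (t d : ℕ) : Measure (Fin t → Fin d → ℝ) :=
  Measure.pi fun _ : Fin t => Measure.pi fun _ : Fin d => gaussianReal 0 (t : ℝ≥0)⁻¹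

noncomputable def appJL {t d : ℕ} (G : Fin t → Fin d → ℝ)
    (x : EuclideanSpace ℝ (Fin d)) : EuclideanSpace ℝ (Fin t) :=
  WithLp.toLp 2 (fun i => ∑ j, G i j * x j)

noncomputable def nearestDist {d : ℕ} (p : EuclideanSpace ℝ (Fin d))
    (C : Finset (EuclideanSpace ℝ (Fin d))) : ℝ :=
  sInf ((fun c => ‖p - c‖) '' ↑C)

noncomputable def costZ {d : ℕ} (P C : Finset (EuclideanSpace ℝ (Fin d))) (z : ℝ) : ℝ :=
  ∑ p ∈ P, nearestDist p C ^ z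

noncomputable def optZ {d : ℕ} (P Q : Finset (EuclideanSpace ℝ (Fin d))) (k : ℕ) (z : ℝ) : ℝ :=
  sInf {v | ∃ C : Finset (EuclideanSpace ℝ (Fin d)),
    C ⊆ Q ∧ C.Nonempty ∧ C.card ≤ k ∧ v = costZ P C z}

def HasDoublingDim {d : ℕ} (S : Set (EuclideanSpace ℝ (Fin d))) (m : ℝ) : Prop :=
  ∀ x ∈ S, ∀ r > 0, ∃ F : Finset (EuclideanSpace ℝ (Fin d)),
    (F.card : ℝ) ≤ (2 : ℝ) ^ m ∧
      S ∩ closedBall x r ⊆ ⋃ y ∈ F, closedBall y (r / 2)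

/-- Bound on the distance from the nearest center C(p) of p to a point c*:
‖C(p) − c*‖ ≤ 4·max{r, ‖c* − C(c*)‖} whenever r ≥ ‖p − c*‖. -/
theorem nearest_center_distance_bound {d : ℕ}
    (C : Finset (EuclideanSpace ℝ (Fin d))) (hC : C.Nonempty)
    (p cstar : EuclideanSpace ℝ (Fin d)) (r : ℝ) (hr : ‖p - cstar‖ ≤ r)
    (Cp Ccstar : EuclideanSpace ℝ (Fin d)) (hCp : Cp ∈ C) (hCcstar : Ccstar ∈ C)
    (hCp_min : ∀ c ∈ C, ‖p - Cp‖ ≤ ‖p - c‖)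
    (hCcstar_min : ∀ c ∈ C, ‖cstar - Ccstar‖ ≤ ‖cstar - c‖) :
    ‖Cp - cstar‖ ≤ 4 * max r ‖cstar - Ccstar‖ := by
  have h1 : ‖p - Cp‖ ≤ ‖p - Ccstar‖ := hCp_min _ hCcstar
  have h2 : ‖p - Ccstar‖ ≤ ‖p - cstar‖ + ‖cstar - Ccstar‖ := norm_sub_le_norm_sub_add_norm_sub _ _ _
  have h3 : ‖Cp - cstar‖ ≤ ‖Cp - p‖ + ‖p - cstar‖ := norm_sub_le_norm_sub_add_norm_sub _ _ _
  have h4 : ‖Cp - p‖ = ‖p - Cp‖ := norm_sub_rev _ _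
  have h5 : r ≤ max r ‖cstar - Ccstar‖ := le_max_left _ _
  have h6 : ‖cstar - Ccstar‖ ≤ max r ‖cstar - Ccstar‖ := le_max_right _ _
  have h7 : (0:ℝ) ≤ max r ‖cstar - Ccstar‖ := le_trans (norm_nonneg _) h6
  linarith
end

section
/- Let (X, dist) be a metric space, let z ≥ 1 be a real number, and let ε ∈ (0,1). Then for all points p, q, r ∈ X, the following two inequalities hold: (i) dist(p,q)^z ≥ (1 − z·ε)·dist(p,r)^z − ε^{−z}·dist(q,r)^z; and (ii) dist(p,q)^z ≤ (1+ε)^{z−1}·dist(p,r)^z + ((1+ε)/ε)^{z−1}·dist(q,r)^z. -/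
open Set

private lemma aux_upper {z ε a b : ℝ} (hz : 1 ≤ z) (hε : 0 < ε) (ha : 0 ≤ a) (hb : 0 ≤ b) :
    (a + b) ^ z ≤ (1 + ε) ^ (z - 1) * a ^ z + ((1 + ε) / ε) ^ (z - 1) * b ^ z := by
  have h1ε : (0:ℝ) < 1 + ε := by linarith
  have hθ : (0:ℝ) ≤ (1 + ε)⁻¹ := by positivity
  have hθ' : (0:ℝ) ≤ 1 - (1 + ε)⁻¹ := by
    rw [sub_nonneg, inv_le_one_iff₀]; right; linarith
  have hcvx := (convexOn_rpow hz).2 (x := a * (1 + ε)) (y := b * (1 + ε) / ε)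
    (by positivity : (0:ℝ) ≤ a * (1 + ε)) (by positivity : (0:ℝ) ≤ b * (1 + ε) / ε)
    hθ hθ' (by ring)
  have hxy : (1 + ε)⁻¹ • (a * (1 + ε)) + (1 - (1 + ε)⁻¹) • (b * (1 + ε) / ε) = a + b := by
    have he : 1 - (1 + ε)⁻¹ = ε / (1 + ε) := by field_simp; ring
    rw [he, smul_eq_mul, smul_eq_mul]; field_simp
  rw [hxy] at hcvx
  refine hcvx.trans_eq ?_
  have h1 : (1 + ε)⁻¹ • (a * (1 + ε)) ^ z = (1 + ε) ^ (z - 1) * a ^ z := by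
    rw [smul_eq_mul, Real.mul_rpow ha h1ε.le, Real.rpow_sub h1ε, Real.rpow_one]
    ring
  have h2 : (1 - (1 + ε)⁻¹) • (b * (1 + ε) / ε) ^ z = ((1 + ε) / ε) ^ (z - 1) * b ^ z := by
    have he : 1 - (1 + ε)⁻¹ = ε / (1 + ε) := by field_simp; ring
    have hb' : b * (1 + ε) / ε = b * ((1 + ε) / ε) := by ring
    rw [he, hb', smul_eq_mul, Real.mul_rpow hb (by positivity),
      Real.rpow_sub (by positivity), Real.rpow_one]
    field_simp
  rw [h1, h2]

private lemma aux_lower {z ε a b c : ℝ} (hz : 1 ≤ z) (hε : ε ∈ Set.Ioo (0:ℝ) 1)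
    (ha : 0 ≤ a) (hb : 0 ≤ b) (hc : 0 ≤ c) (h : a ≤ c + b) :
    (1 - z * ε) * a ^ z - ε⁻¹ ^ z * b ^ z ≤ c ^ z := by
  obtain ⟨hε0, hε1⟩ := hε
  have hcz : 0 ≤ c ^ z := Real.rpow_nonneg hc z
  have haz : 0 ≤ a ^ z := Real.rpow_nonneg ha z
  have hbz : 0 ≤ b ^ z := Real.rpow_nonneg hb z
  rcases le_or_gt (ε * a) b with hcase | hcase
  · -- b ≥ ε a : LHS ≤ 0
    have h1 : a ^ z ≤ ε⁻¹ ^ z * b ^ z := by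
      rw [← Real.mul_rpow (by positivity) hb]
      refine Real.rpow_le_rpow ha ?_ (le_trans zero_le_one hz)
      rw [le_inv_mul_iff₀ hε0]; linarith
    have h2 : (1 - z * ε) * a ^ z ≤ a ^ z := by
      nlinarith [mul_nonneg (mul_nonneg (le_trans zero_le_one hz) hε0.le) haz]
    linarith
  · -- b < ε a : a > 0
    have ha0 : 0 < a := by nlinarith
    have hba : b / a < ε := (div_lt_iff₀ ha0).mpr (by linarith)
    have hba1 : -1 ≤ -(b / a) := by
      rw [neg_le_neg_iff]
      exact le_trans hba.le hε1.le
    have hbern := one_add_mul_self_le_rpow_one_add hba1 hz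
    -- (1 + z * (-(b/a))) ≤ (1 - b/a)^z
    have h1a : (0:ℝ) ≤ 1 - b / a := by linarith
    have key : (1 - z * ε) * a ^ z ≤ (a - b) ^ z := by
      have h1 : (1 - b / a) ^ z * a ^ z = (a - b) ^ z := by
        rw [← Real.mul_rpow h1a ha]
        congr 1
        field_simp
      have h2 : (1 + z * -(b / a)) * a ^ z ≤ (1 + -(b / a)) ^ z * a ^ z :=
        mul_le_mul_of_nonneg_right hbern haz
      have h3 : (1 - z * ε) * a ^ z ≤ (1 + z * -(b / a)) * a ^ z := by
        apply mul_le_mul_of_nonneg_right _ haz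
        nlinarith [mul_le_mul_of_nonneg_left hba.le (le_trans zero_le_one hz)]
      calc (1 - z * ε) * a ^ z ≤ (1 + z * -(b / a)) * a ^ z := h3
        _ ≤ (1 + -(b / a)) ^ z * a ^ z := h2
        _ = (1 - b / a) ^ z * a ^ z := by ring_nf
        _ = (a - b) ^ z := h1
    have hab : a - b ≤ c := by linarith
    have h2 : (a - b) ^ z ≤ c ^ z :=
      Real.rpow_le_rpow (by nlinarith) hab (le_trans zero_le_one hz)
    have h3 : 0 ≤ ε⁻¹ ^ z * b ^ z := mul_nonneg (Real.rpow_nonneg (by positivity) z) hbz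
    linarith

/-- Generalized triangle inequalities for the z-th power of a metric. -/
theorem generalized_triangle_inequalities {X : Type*} [MetricSpace X]
    (z ε : ℝ) (hz : 1 ≤ z) (hε : ε ∈ Set.Ioo (0 : ℝ) 1) (p q r : X) :
    (1 - z * ε) * dist p r ^ z - ε⁻¹ ^ z * dist q r ^ z ≤ dist p q ^ z ∧
    dist p q ^ z ≤ (1 + ε) ^ (z - 1) * dist p r ^ z +
      ((1 + ε) / ε) ^ (z - 1) * dist q r ^ z := by
  constructor
  · exact aux_lower hz hε dist_nonneg dist_nonneg dist_nonneg (dist_triangle p q r)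
  · calc dist p q ^ z ≤ (dist p r + dist q r) ^ z :=
          Real.rpow_le_rpow dist_nonneg (by rw [dist_comm q r]; exact dist_triangle p r q)
            (le_trans zero_le_one hz)
    _ ≤ _ := aux_upper hz hε.1 dist_nonneg dist_nonneg
end

section
/- Let x ∈ ℝ^d, ε ∈ (0,1), t ∈ ℕ with t ≥ 1, and let G ∈ ℝ^{t×d} be a Gaussian JL map. Then Pr( ‖Gx‖ ∉ [(1−ε)·‖x‖, (1+ε)·‖x‖] ) ≤ exp(−ε²·t/8). -/
open MeasureTheory ProbabilityTheory Metric
open scoped ENNReal NNReal Classical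

section JLAux
open Real

private lemma hasDeriv_L1 (y : ℝ) (hy : y < 1) :
    HasDerivAt (fun y : ℝ => -Real.log (1 - y) - y - y ^ 2 / 2)
      ((1 - y)⁻¹ - 1 - y) y := by
  have h1 : HasDerivAt (fun y : ℝ => 1 - y) (-1) y := by
    simpa using (hasDerivAt_id y).const_sub 1
  have h2 : HasDerivAt (fun y : ℝ => Real.log (1 - y)) (-1 / (1 - y)) y := by
    simpa using h1.log (by linarith : (1:ℝ) - y ≠ 0)
  have h3 : HasDerivAt (fun y : ℝ => y ^ 2 / 2) y y := by
    simpa using (hasDerivAt_pow 2 y).div_const 2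
  have := ((h2.neg.sub (hasDerivAt_id y)).sub h3)
  exact this.congr_deriv (by ring)

/-- `x + x²/2 ≤ -log (1-x)` for `0 ≤ x < 1`. -/
lemma aux_log_one_sub (x : ℝ) (h0 : 0 ≤ x) (h1 : x < 1) :
    x + x ^ 2 / 2 ≤ -Real.log (1 - x) := by
  set f : ℝ → ℝ := fun y => -Real.log (1 - y) - y - y ^ 2 / 2 with hf
  have hmem : ∀ y ∈ Set.Icc (0:ℝ) x, y < 1 := fun y hy => lt_of_le_of_lt hy.2 h1
  have hmono : MonotoneOn f (Set.Icc 0 x) := by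
    apply monotoneOn_of_deriv_nonneg (convex_Icc 0 x)
    · intro y hy
      exact (hasDeriv_L1 y (hmem y hy)).differentiableAt.continuousAt.continuousWithinAt
    · intro y hy
      rw [interior_Icc] at hy
      exact (hasDeriv_L1 y (hmem y ⟨le_of_lt hy.1, le_of_lt hy.2⟩)).differentiableAt.differentiableWithinAt
    · intro y hy
      rw [interior_Icc] at hy
      have hylt : y < 1 := lt_of_lt_of_le hy.2 (le_of_lt h1) |>.trans_le (le_refl _)
      rw [(hasDeriv_L1 y hylt).deriv]
      have h1y : (0:ℝ) < 1 - y := by linarith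
      have : (1 - y)⁻¹ - 1 - y = y ^ 2 / (1 - y) := by field_simp; ring
      rw [this]
      positivity
  have h00 : f 0 = 0 := by simp [hf]
  have := hmono (Set.left_mem_Icc.2 h0) (Set.right_mem_Icc.2 h0) h0
  rw [h00] at this
  simp only [hf] at this
  linarith

private lemma hasDeriv_L2 (y : ℝ) (hy : -1 < y) :
    HasDerivAt (fun y : ℝ => Real.log (1 + y) - y + y ^ 2 / 2)
      ((1 + y)⁻¹ - 1 + y) y := by
  have h1 : HasDerivAt (fun y : ℝ => 1 + y) 1 y := by
    simpa using (hasDerivAt_id y).const_add 1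
  have h2 : HasDerivAt (fun y : ℝ => Real.log (1 + y)) (1 / (1 + y)) y := by
    simpa using h1.log (by linarith : (1:ℝ) + y ≠ 0)
  have h3 : HasDerivAt (fun y : ℝ => y ^ 2 / 2) y y := by
    simpa using (hasDerivAt_pow 2 y).div_const 2
  have := ((h2.sub (hasDerivAt_id y)).add h3)
  exact this.congr_deriv (by ring)

/-- `x - x²/2 ≤ log (1+x)` for `0 ≤ x`. -/
lemma aux_log_one_add (x : ℝ) (h0 : 0 ≤ x) :
    x - x ^ 2 / 2 ≤ Real.log (1 + x) := by
  set f : ℝ → ℝ := fun y => Real.log (1 + y) - y + y ^ 2 / 2 with hf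
  have hmem : ∀ y ∈ Set.Icc (0:ℝ) x, -1 < y := fun y hy => by
    have := hy.1; linarith
  have hmono : MonotoneOn f (Set.Icc 0 x) := by
    apply monotoneOn_of_deriv_nonneg (convex_Icc 0 x)
    · intro y hy
      exact (hasDeriv_L2 y (hmem y hy)).differentiableAt.continuousAt.continuousWithinAt
    · intro y hy
      rw [interior_Icc] at hy
      exact (hasDeriv_L2 y (hmem y ⟨le_of_lt hy.1, le_of_lt hy.2⟩)).differentiableAt.differentiableWithinAt
    · intro y hy
      rw [interior_Icc] at hy
      have hy0 : (0:ℝ) < y := hy.1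
      rw [(hasDeriv_L2 y (by linarith)).deriv]
      have h1y : (0:ℝ) < 1 + y := by linarith
      have : (1 + y)⁻¹ - 1 + y = y ^ 2 / (1 + y) := by field_simp; ring
      rw [this]
      positivity
  have h00 : f 0 = 0 := by simp [hf]
  have := hmono (Set.left_mem_Icc.2 h0) (Set.right_mem_Icc.2 h0) h0
  rw [h00] at this
  simp only [hf] at this
  linarith

/-- Pointwise exponential-tilt identity for Gaussian densities. -/
lemma gauss_pdf_tilt (v rn : ℝ≥0) (hv : v ≠ 0) (hr : rn ≠ 0) (z : ℝ) :
    Real.exp ((1 - (rn:ℝ)) * z ^ 2 * (2 * (v:ℝ))⁻¹) * gaussianPDFReal 0 v z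
      = (Real.sqrt rn)⁻¹ * gaussianPDFReal 0 (v / rn) z := by
  have hv0 : (0:ℝ) < (v:ℝ) := lt_of_le_of_ne v.coe_nonneg (by exact_mod_cast (Ne.symm hv))
  have hr0 : (0:ℝ) < (rn:ℝ) := lt_of_le_of_ne rn.coe_nonneg (by exact_mod_cast (Ne.symm hr))
  have hdiv : ((v / rn : ℝ≥0) : ℝ) = (v:ℝ) / (rn:ℝ) := by push_cast; ring
  unfold gaussianPDFReal
  rw [hdiv]
  have hπ : (0:ℝ) < π := Real.pi_pos
  -- constants
  have hconst : (Real.sqrt (2 * π * ((v:ℝ) / rn)))⁻¹ * (Real.sqrt rn)⁻¹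
      = (Real.sqrt (2 * π * (v:ℝ)))⁻¹ := by
    rw [← mul_inv, ← Real.sqrt_mul (by positivity)]
    congr 2
    field_simp
  -- exponents
  have hexp : Real.exp ((1 - (rn:ℝ)) * z ^ 2 * (2 * (v:ℝ))⁻¹) * Real.exp (-(z - 0) ^ 2 / (2 * (v:ℝ)))
      = Real.exp (-(z - 0) ^ 2 / (2 * ((v:ℝ) / rn))) := by
    rw [← Real.exp_add]
    congr 1
    field_simp
    ring
  calc Real.exp ((1 - (rn:ℝ)) * z ^ 2 * (2 * (v:ℝ))⁻¹)
        * ((Real.sqrt (2 * π * (v:ℝ)))⁻¹ * Real.exp (-(z - 0) ^ 2 / (2 * (v:ℝ))))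
      = (Real.sqrt (2 * π * (v:ℝ)))⁻¹
        * (Real.exp ((1 - (rn:ℝ)) * z ^ 2 * (2 * (v:ℝ))⁻¹) * Real.exp (-(z - 0) ^ 2 / (2 * (v:ℝ)))) := by
        ring
    _ = (Real.sqrt (2 * π * (v:ℝ)))⁻¹ * Real.exp (-(z - 0) ^ 2 / (2 * ((v:ℝ) / rn))) := by rw [hexp]
    _ = (Real.sqrt rn)⁻¹ * ((Real.sqrt (2 * π * ((v:ℝ) / rn)))⁻¹ * Real.exp (-(z - 0) ^ 2 / (2 * ((v:ℝ) / rn)))) := by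
        rw [← hconst]; ring

/-- Gaussian measure absorbs an exponential-quadratic density. -/
lemma gauss_withDensity_tilt (v rn : ℝ≥0) (hv : v ≠ 0) (hr : rn ≠ 0) :
    (gaussianReal 0 v).withDensity
        (fun z => ENNReal.ofReal (Real.sqrt rn * Real.exp ((1 - (rn:ℝ)) * z ^ 2 * (2 * (v:ℝ))⁻¹)))
      = gaussianReal 0 (v / rn) := by
  have hdv : (v / rn : ℝ≥0) ≠ 0 := by
    simp [div_eq_mul_inv, hv, hr]
  rw [gaussianReal_of_var_ne_zero _ hv, gaussianReal_of_var_ne_zero _ hdv,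
    ← withDensity_mul]
  · congr 1
    funext z
    simp only [Pi.mul_apply, gaussianPDF]
    rw [← ENNReal.ofReal_mul (gaussianPDFReal_nonneg 0 v z)]
    congr 1
    have := gauss_pdf_tilt v rn hv hr z
    have hr0 : (0:ℝ) < Real.sqrt rn := Real.sqrt_pos.2 (lt_of_le_of_ne rn.coe_nonneg (by exact_mod_cast (Ne.symm hr)))
    calc gaussianPDFReal 0 v z * (Real.sqrt rn * Real.exp ((1 - (rn:ℝ)) * z ^ 2 * (2 * (v:ℝ))⁻¹))
        = Real.sqrt rn * (Real.exp ((1 - (rn:ℝ)) * z ^ 2 * (2 * (v:ℝ))⁻¹) * gaussianPDFReal 0 v z) := by ring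
      _ = Real.sqrt rn * ((Real.sqrt rn)⁻¹ * gaussianPDFReal 0 (v / rn) z) := by rw [this]
      _ = gaussianPDFReal 0 (v / rn) z := by
          rw [← mul_assoc, mul_inv_cancel₀ (ne_of_gt hr0), one_mul]
  · exact measurable_gaussianPDF 0 v
  · exact (measurable_id.pow_const 2 |>.const_mul _ |>.mul_const _).exp.const_mul _ |>.ennreal_ofReal

/-- Moment generating function of `z ↦ θ z ^ 2` under a centred Gaussian. -/
lemma gauss_mgf_sq (v : ℝ≥0) (hv : v ≠ 0) (θ : ℝ) (hθ : 2 * θ * (v:ℝ) < 1) :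
    ∫⁻ z, ENNReal.ofReal (Real.exp (θ * z ^ 2)) ∂(gaussianReal 0 v)
      = ENNReal.ofReal ((Real.sqrt (1 - 2 * θ * (v:ℝ)))⁻¹) := by
  have hv0 : (0:ℝ) < (v:ℝ) := lt_of_le_of_ne v.coe_nonneg (by exact_mod_cast (Ne.symm hv))
  set r : ℝ := 1 - 2 * θ * (v:ℝ) with hrdef
  have hr0 : 0 < r := by rw [hrdef]; linarith
  set rn : ℝ≥0 := ⟨r, le_of_lt hr0⟩ with hrn
  have hrne : rn ≠ 0 := by
    simp only [hrn, ne_eq, ← NNReal.coe_eq_zero]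
    exact ne_of_gt hr0
  have hθeq : ∀ z : ℝ, θ * z ^ 2 = (1 - (rn:ℝ)) * z ^ 2 * (2 * (v:ℝ))⁻¹ := by
    intro z
    have : (rn : ℝ) = r := rfl
    rw [this, hrdef]
    field_simp
    ring
  have hg : Measurable fun z : ℝ => ENNReal.ofReal (Real.exp (θ * z ^ 2)) := by fun_prop
  rw [gaussianReal_of_var_ne_zero _ hv,
    lintegral_withDensity_eq_lintegral_mul _ (measurable_gaussianPDF 0 v) hg]
  have hpt : ∀ z : ℝ, (gaussianPDF 0 v * fun z => ENNReal.ofReal (Real.exp (θ * z ^ 2))) z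
      = ENNReal.ofReal ((Real.sqrt rn)⁻¹) * gaussianPDF 0 (v / rn) z := by
    intro z
    simp only [Pi.mul_apply, gaussianPDF]
    rw [← ENNReal.ofReal_mul (gaussianPDFReal_nonneg 0 v z),
      ← ENNReal.ofReal_mul (by positivity)]
    congr 1
    rw [hθeq z, mul_comm (gaussianPDFReal 0 v z), gauss_pdf_tilt v rn hv hrne z]
  rw [lintegral_congr hpt, lintegral_const_mul _ (measurable_gaussianPDF _ _),
    lintegral_gaussianPDF_eq_one _ (by simp [div_eq_mul_inv, hv, hrne]), mul_one]
  rfl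

/-- Pointwise factorization of a product of two Gaussian densities. -/
lemma gauss_pdf_conv_pointwise (a b : ℝ≥0) (ha : a ≠ 0) (hb : b ≠ 0) (x z : ℝ) :
    gaussianPDFReal 0 a x * gaussianPDFReal x b z
      = gaussianPDFReal 0 (a + b) z
        * gaussianPDFReal ((a:ℝ) * z / ((a:ℝ) + (b:ℝ))) (a * b / (a + b)) x := by
  have ha0 : (0:ℝ) < (a:ℝ) := lt_of_le_of_ne a.coe_nonneg (by exact_mod_cast (Ne.symm ha))
  have hb0 : (0:ℝ) < (b:ℝ) := lt_of_le_of_ne b.coe_nonneg (by exact_mod_cast (Ne.symm hb))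
  have hab0 : (0:ℝ) < (a:ℝ) + (b:ℝ) := by linarith
  have hπ : (0:ℝ) < π := Real.pi_pos
  have hcoe1 : ((a + b : ℝ≥0) : ℝ) = (a:ℝ) + (b:ℝ) := by push_cast; ring
  have hcoe2 : ((a * b / (a + b) : ℝ≥0) : ℝ) = (a:ℝ) * (b:ℝ) / ((a:ℝ) + (b:ℝ)) := by
    push_cast; ring
  unfold gaussianPDFReal
  rw [hcoe1, hcoe2]
  have hw0 : (0:ℝ) < (a:ℝ) * (b:ℝ) / ((a:ℝ) + (b:ℝ)) := by positivity
  -- constants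
  have hconst : (Real.sqrt (2 * π * (a:ℝ)))⁻¹ * (Real.sqrt (2 * π * (b:ℝ)))⁻¹
      = (Real.sqrt (2 * π * ((a:ℝ) + (b:ℝ))))⁻¹
        * (Real.sqrt (2 * π * ((a:ℝ) * (b:ℝ) / ((a:ℝ) + (b:ℝ)))))⁻¹ := by
    rw [← mul_inv, ← mul_inv, ← Real.sqrt_mul (by positivity), ← Real.sqrt_mul (by positivity)]
    congr 2
    field_simp
  -- exponents
  have hexp : Real.exp (-(x - 0) ^ 2 / (2 * (a:ℝ))) * Real.exp (-(z - x) ^ 2 / (2 * (b:ℝ)))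
      = Real.exp (-(z - 0) ^ 2 / (2 * ((a:ℝ) + (b:ℝ))))
        * Real.exp (-(x - (a:ℝ) * z / ((a:ℝ) + (b:ℝ))) ^ 2
            / (2 * ((a:ℝ) * (b:ℝ) / ((a:ℝ) + (b:ℝ))))) := by
    rw [← Real.exp_add, ← Real.exp_add]
    congr 1
    field_simp
    ring
  calc (Real.sqrt (2 * π * (a:ℝ)))⁻¹ * Real.exp (-(x - 0) ^ 2 / (2 * (a:ℝ)))
        * ((Real.sqrt (2 * π * (b:ℝ)))⁻¹ * Real.exp (-(z - x) ^ 2 / (2 * (b:ℝ))))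
      = (Real.sqrt (2 * π * (a:ℝ)))⁻¹ * (Real.sqrt (2 * π * (b:ℝ)))⁻¹
        * (Real.exp (-(x - 0) ^ 2 / (2 * (a:ℝ))) * Real.exp (-(z - x) ^ 2 / (2 * (b:ℝ)))) := by
        ring
    _ = _ := by rw [hconst, hexp]; ring

/-- The convolution integral of two Gaussian densities. -/
lemma gauss_conv_integral (a b : ℝ≥0) (ha : a ≠ 0) (hb : b ≠ 0) (z : ℝ) :
    ∫⁻ x, gaussianPDF 0 a x * gaussianPDF x b z = gaussianPDF 0 (a + b) z := by
  have hw : (a * b / (a + b) : ℝ≥0) ≠ 0 := by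
    have : (a + b : ℝ≥0) ≠ 0 := by simp [ha]
    simp [div_eq_mul_inv, ha, hb, this]
  have hpt : ∀ x, gaussianPDF 0 a x * gaussianPDF x b z
      = ENNReal.ofReal (gaussianPDFReal 0 (a + b) z)
        * ENNReal.ofReal (gaussianPDFReal ((a:ℝ) * z / ((a:ℝ) + (b:ℝ))) (a * b / (a + b)) x) := by
    intro x
    rw [gaussianPDF, gaussianPDF, ← ENNReal.ofReal_mul (gaussianPDFReal_nonneg 0 a x),
      gauss_pdf_conv_pointwise a b ha hb x z,
      ENNReal.ofReal_mul (gaussianPDFReal_nonneg 0 (a+b) z)]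
  simp_rw [hpt]
  rw [lintegral_const_mul _ ((measurable_gaussianPDFReal _ _).ennreal_ofReal)]
  have h1 : ∫⁻ x, ENNReal.ofReal (gaussianPDFReal ((a:ℝ) * z / ((a:ℝ) + (b:ℝ)))
      (a * b / (a + b)) x) = 1 := lintegral_gaussianPDF_eq_one _ hw
  rw [h1, mul_one]
  rfl

/-- Sum of independent centred Gaussians is Gaussian. -/
lemma gaussian_conv (a b : ℝ≥0) :
    Measure.map (fun p : ℝ × ℝ => p.1 + p.2) ((gaussianReal 0 a).prod (gaussianReal 0 b))
      = gaussianReal 0 (a + b) := by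
  by_cases ha : a = 0
  · subst ha
    rw [gaussianReal_zero_var, Measure.dirac_prod, Measure.map_map measurable_add (by fun_prop),
      zero_add]
    have : ((fun p : ℝ × ℝ => p.1 + p.2) ∘ fun y : ℝ => ((0:ℝ), y)) = id := by
      funext y; simp
    rw [this, Measure.map_id]
  by_cases hb : b = 0
  · subst hb
    rw [gaussianReal_zero_var, Measure.prod_dirac, Measure.map_map measurable_add (by fun_prop),
      add_zero]
    have : ((fun p : ℝ × ℝ => p.1 + p.2) ∘ fun x : ℝ => (x, (0:ℝ))) = id := by
      funext y; simp
    rw [this, Measure.map_id]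
  -- main case
  have hm1 : Measurable fun q : ℝ × ℝ => gaussianPDF q.1 b q.2 := by
    unfold gaussianPDF gaussianPDFReal
    fun_prop
  ext s hs
  have hind1 : ∀ (x z : ℝ), (s.indicator fun z => gaussianPDF x b z) z
      = s.indicator (fun _ => (1:ℝ≥0∞)) z * gaussianPDF x b z := by
    intro x z
    by_cases hz : z ∈ s <;> simp [hz]
  rw [Measure.map_apply measurable_add hs, Measure.prod_apply (measurable_add hs)]
  have hinner : ∀ x : ℝ, gaussianReal 0 b (Prod.mk x ⁻¹' ((fun p : ℝ × ℝ => p.1 + p.2) ⁻¹' s))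
      = ∫⁻ z, s.indicator (fun _ => (1:ℝ≥0∞)) z * gaussianPDF x b z := by
    intro x
    have hpre : Prod.mk x ⁻¹' ((fun p : ℝ × ℝ => p.1 + p.2) ⁻¹' s) = (fun y => x + y) ⁻¹' s := rfl
    rw [hpre, ← Measure.map_apply (by fun_prop) hs, gaussianReal_map_const_add,
      zero_add, gaussianReal_of_var_ne_zero _ hb, withDensity_apply _ hs,
      ← lintegral_indicator hs]
    exact lintegral_congr fun z => hind1 x z
  simp_rw [hinner]
  have hmF : Measurable fun x : ℝ => ∫⁻ z, s.indicator (fun _ => (1:ℝ≥0∞)) z * gaussianPDF x b z := by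
    exact Measurable.lintegral_prod_right'
      (f := fun q : ℝ × ℝ => s.indicator (fun _ => (1:ℝ≥0∞)) q.2 * gaussianPDF q.1 b q.2)
      (((measurable_const.indicator hs).comp measurable_snd).mul hm1)
  rw [gaussianReal_of_var_ne_zero _ ha,
    lintegral_withDensity_eq_lintegral_mul _ (measurable_gaussianPDF 0 a) hmF]
  have hpull : ∀ x : ℝ, gaussianPDF 0 a x * ∫⁻ z, s.indicator (fun _ => (1:ℝ≥0∞)) z * gaussianPDF x b z
      = ∫⁻ z, gaussianPDF 0 a x * (s.indicator (fun _ => (1:ℝ≥0∞)) z * gaussianPDF x b z) :=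
    fun x => (lintegral_const_mul _ ((measurable_const.indicator hs).mul (measurable_gaussianPDF x b))).symm
  calc ∫⁻ x, (gaussianPDF 0 a
        * fun x => ∫⁻ z, s.indicator (fun _ => (1:ℝ≥0∞)) z * gaussianPDF x b z) x
      = ∫⁻ x, ∫⁻ z, gaussianPDF 0 a x * (s.indicator (fun _ => (1:ℝ≥0∞)) z * gaussianPDF x b z) := by
        simp_rw [Pi.mul_apply]
        exact lintegral_congr hpull
    _ = ∫⁻ z, ∫⁻ x, gaussianPDF 0 a x * (s.indicator (fun _ => (1:ℝ≥0∞)) z * gaussianPDF x b z) := by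
        refine lintegral_lintegral_swap ?_
        apply Measurable.aemeasurable
        exact ((measurable_gaussianPDF 0 a).comp measurable_fst).mul
          (((measurable_const.indicator hs).comp measurable_snd).mul hm1)
    _ = ∫⁻ z, s.indicator (fun _ => (1:ℝ≥0∞)) z * ∫⁻ x, gaussianPDF 0 a x * gaussianPDF x b z := by
        refine lintegral_congr fun z => ?_
        by_cases hz : z ∈ s <;> simp [hz]
    _ = ∫⁻ z, s.indicator (fun _ => (1:ℝ≥0∞)) z * gaussianPDF 0 (a + b) z := by
        refine lintegral_congr fun z => ?_
        rw [gauss_conv_integral a b ha hb z]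
    _ = gaussianReal 0 (a + b) s := by
        rw [gaussianReal_of_var_ne_zero _ (by simp [ha] : (a + b : ℝ≥0) ≠ 0),
          withDensity_apply _ hs, ← lintegral_indicator hs]
        refine lintegral_congr fun z => ?_
        by_cases hz : z ∈ s <;> simp [hz]

/-- Law of a linear form of i.i.d. centred Gaussians. -/
lemma gaussian_row_law (v : ℝ≥0) : ∀ (d : ℕ) (x : Fin d → ℝ),
    Measure.map (fun g : Fin d → ℝ => ∑ j, g j * x j) (Measure.pi fun _ => gaussianReal 0 v)
      = gaussianReal 0 (v * (∑ j, (x j)^2).toNNReal) := by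
  intro d
  induction d with
  | zero =>
      intro x
      have : (fun g : Fin 0 → ℝ => ∑ j, g j * x j) = fun _ => (0:ℝ) := by
        funext g; simp
      rw [this, Measure.map_const, measure_univ, one_smul]
      simp [gaussianReal_zero_var]
  | succ d ih =>
      intro x
      set e := MeasurableEquiv.piFinSuccAbove (fun _ : Fin (d+1) => ℝ) 0 with he
      have hMP := measurePreserving_piFinSuccAbove (fun _ : Fin (d+1) => gaussianReal 0 v) 0
      have hpi : (Measure.pi fun _ : Fin (d+1) => gaussianReal 0 v)
          = Measure.map e.symm ((gaussianReal 0 v).prod (Measure.pi fun _ : Fin d => gaussianReal 0 v)) := by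
        rw [← hMP.map_eq, Measure.map_map e.symm.measurable e.measurable]
        simp
      have hL : Measurable fun g : Fin (d+1) → ℝ => ∑ j, g j * x j :=
        Finset.measurable_sum _ fun j _ => (measurable_pi_apply j).mul_const _
      rw [hpi, Measure.map_map hL e.symm.measurable]
      have hcomp : ((fun g : Fin (d+1) → ℝ => ∑ j, g j * x j) ∘ e.symm)
          = (fun p : ℝ × ℝ => p.1 + p.2)
            ∘ (Prod.map (fun z : ℝ => z * x 0) (fun w : Fin d → ℝ => ∑ j, w j * x (Fin.succ j))) := by
        funext p
        simp only [Function.comp_apply, Prod.map_apply]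
        rw [he]
        simp only [MeasurableEquiv.piFinSuccAbove_symm_apply, Fin.insertNthEquiv,
          Fin.insertNth_zero]
        rw [Fin.sum_univ_succ]
        simp [Fin.cons_zero, Fin.cons_succ]
      rw [hcomp, ← Measure.map_map measurable_add (by fun_prop),
        ← Measure.map_prod_map _ _ (by fun_prop)
          (Finset.measurable_sum _ fun j _ => (measurable_pi_apply j).mul_const _),
        gaussianReal_map_mul_const (x 0), ih (fun j => x (Fin.succ j)), mul_zero,
        gaussian_conv]
      congr 1
      rw [← NNReal.coe_inj]
      push_cast [Real.coe_toNNReal _ (by positivity : (0:ℝ) ≤ ∑ j : Fin d, x (Fin.succ j) ^ 2),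
        Real.coe_toNNReal _ (by positivity : (0:ℝ) ≤ ∑ j : Fin (d+1), x j ^ 2)]
      rw [Fin.sum_univ_succ]
      ring

/-- Lintegral of a product of coordinate functions over a finite product measure. -/
lemma lintegral_pi_prod : ∀ (n : ℕ) (μ : Fin n → Measure ℝ), (∀ i, SigmaFinite (μ i)) →
    ∀ (f : Fin n → ℝ → ℝ≥0∞), (∀ i, Measurable (f i)) →
    ∫⁻ y, ∏ i, f i (y i) ∂Measure.pi μ = ∏ i, ∫⁻ z, f i z ∂(μ i) := by
  intro n
  induction n with
  | zero =>
      intro μ hσ f hf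
      simp [lintegral_const, Measure.pi_empty_univ]
  | succ d ih =>
      intro μ hσ f hf
      have := fun i => hσ i
      set e := MeasurableEquiv.piFinSuccAbove (fun _ : Fin (d+1) => ℝ) 0 with he
      have hMP := measurePreserving_piFinSuccAbove μ 0
      have hpi : Measure.pi μ = Measure.map e.symm ((μ 0).prod (Measure.pi fun j : Fin d => μ (Fin.succAbove 0 j))) := by
        rw [← hMP.map_eq, Measure.map_map e.symm.measurable e.measurable]
        simp
      rw [hpi, lintegral_map_equiv]
      have hpt : ∀ p : ℝ × (Fin d → ℝ), ∏ i, f i (e.symm p i)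
          = f 0 p.1 * ∏ j : Fin d, f (Fin.succ j) (p.2 j) := by
        intro p
        rw [he]
        simp only [MeasurableEquiv.piFinSuccAbove_symm_apply, Fin.insertNthEquiv,
          Fin.insertNth_zero]
        rw [Fin.prod_univ_succ]
        simp [Fin.cons_zero, Fin.cons_succ]
      simp_rw [hpt]
      rw [lintegral_prod_mul (f := f 0) (g := fun w : Fin d → ℝ => ∏ j : Fin d, f (Fin.succ j) (w j))
        ((hf 0).aemeasurable)
        ((Finset.measurable_prod _ fun j _ => (hf _).comp (measurable_pi_apply j)).aemeasurable)]
      have hmeq : (fun j : Fin d => μ (Fin.succAbove 0 j)) = fun j : Fin d => μ (Fin.succ j) := by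
        funext j; rw [Fin.zero_succAbove]
      rw [hmeq, ih _ (fun j => inferInstance) _ (fun j => hf _), Fin.prod_univ_succ]

/-- A product of Gaussian measures, each written as a density against another Gaussian,
is the density of the product of densities against the product measure. -/
lemma pi_gauss_withDensity (n : ℕ) (v V : ℝ≥0) (ρ : ℝ → ℝ≥0∞) (hρ : Measurable ρ)
    (h : (gaussianReal 0 v).withDensity ρ = gaussianReal 0 V) :
    Measure.pi (fun _ : Fin n => gaussianReal 0 V)
      = (Measure.pi fun _ : Fin n => gaussianReal 0 v).withDensity (fun y => ∏ i, ρ (y i)) := by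
  apply Measure.pi_eq
  intro s hs
  have hprodmeas : Measurable (fun y : Fin n → ℝ => ∏ i, ρ (y i)) :=
    Finset.measurable_prod _ fun i _ => hρ.comp (measurable_pi_apply i)
  rw [withDensity_apply _ (MeasurableSet.univ_pi hs), ← lintegral_indicator (MeasurableSet.univ_pi hs)]
  have hpt : ∀ y : Fin n → ℝ, (Set.univ.pi s).indicator (fun y => ∏ i, ρ (y i)) y
      = ∏ i, ((s i).indicator ρ) (y i) := by
    intro y
    by_cases hy : y ∈ Set.univ.pi s
    · rw [Set.indicator_of_mem hy]
      exact Finset.prod_congr rfl fun i _ =>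
        (Set.indicator_of_mem (hy i (Set.mem_univ i)) ρ).symm
    · rw [Set.indicator_of_notMem hy]
      rw [Set.mem_univ_pi] at hy
      push_neg at hy
      obtain ⟨i0, hi0⟩ := hy
      exact (Finset.prod_eq_zero (Finset.mem_univ i0)
        (Set.indicator_of_notMem hi0 ρ)).symm
  simp_rw [hpt]
  rw [lintegral_pi_prod n _ (fun _ => inferInstance) _ (fun i => hρ.indicator (hs i))]
  refine Finset.prod_congr rfl fun i _ => ?_
  rw [lintegral_indicator (hs i), ← withDensity_apply _ (hs i), h]

end JLAux

set_option maxHeartbeats 1000000 in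
/-- Gaussian concentration for a single vector: a Gaussian JL map onto dimension t
distorts the norm of x by more than a 1±ε factor with probability at most
exp(−ε²t/8). -/
theorem gaussian_JL_single_vector_concentration {d : ℕ}
    (x : EuclideanSpace ℝ (Fin d)) (ε : ℝ) (hε : ε ∈ Set.Ioo (0 : ℝ) 1)
    (t : ℕ) (ht : 1 ≤ t) :
    gaussianJL t d {G | ‖appJL G x‖ ∉ Set.Icc ((1 - ε) * ‖x‖) ((1 + ε) * ‖x‖)} ≤
      ENNReal.ofReal (Real.exp (-(ε ^ 2 * t) / 8)) := by
  obtain ⟨hε0, hε1⟩ := hε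
  by_cases hx0 : ‖x‖ = 0
  · -- degenerate case
    have hx : x = 0 := norm_eq_zero.mp hx0
    have : {G : Fin t → Fin d → ℝ | ‖appJL G x‖ ∉ Set.Icc ((1 - ε) * ‖x‖) ((1 + ε) * ‖x‖)} = ∅ := by
      ext G
      simp only [Set.mem_setOf_eq, Set.mem_empty_iff_false, iff_false, not_not]
      have : appJL G x = 0 := by
        ext i
        simp [appJL, hx]
      rw [this, hx0, norm_zero]
      simp
    rw [this]
    simp
  -- main case
  have hx : (0:ℝ) < ‖x‖ := lt_of_le_of_ne (norm_nonneg x) (Ne.symm hx0)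
  set u : EuclideanSpace ℝ (Fin d) := ‖x‖⁻¹ • x with hu_def
  have hu_norm : ‖u‖ = 1 := by
    rw [hu_def, norm_smul, norm_inv, norm_norm, inv_mul_cancel₀ hx0]
  have hu_sum : ∑ j, (u j)^2 = 1 := by
    have h := EuclideanSpace.norm_eq u
    rw [hu_norm] at h
    have h3 : ∑ j, ‖u j‖ ^ 2 = 1 := Real.sqrt_eq_one.mp h.symm
    simpa [Real.norm_eq_abs, sq_abs] using h3
  set v : ℝ≥0 := (t : ℝ≥0)⁻¹ with hv_def
  have htpos : (0:ℝ) < (t:ℝ) := by exact_mod_cast Nat.lt_of_lt_of_le Nat.zero_lt_one ht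
  have hv : v ≠ 0 := by
    simp only [hv_def, ne_eq, inv_eq_zero, Nat.cast_eq_zero]
    omega
  set π : Measure (Fin t → ℝ) := Measure.pi (fun _ : Fin t => gaussianReal 0 v) with hπ_def
  set Y : (Fin t → Fin d → ℝ) → (Fin t → ℝ) := fun G i => ∑ j, G i j * u j with hY_def
  have hrowmeas : Measurable fun g : Fin d → ℝ => ∑ j, g j * u j :=
    Finset.measurable_sum _ fun j _ => (measurable_pi_apply j).mul_const _
  have hYmeas : Measurable Y := measurable_pi_lambda _ fun i =>
    hrowmeas.comp (measurable_pi_apply i)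
  have hmap : Measure.map Y (gaussianJL t d) = π := by
    have hrow : ∀ _i : Fin t, MeasurePreserving (fun g : Fin d → ℝ => ∑ j, g j * u j)
        (Measure.pi fun _ : Fin d => gaussianReal 0 v) (gaussianReal 0 v) := by
      intro _
      refine ⟨hrowmeas, ?_⟩
      rw [gaussian_row_law v d (fun j => u j), hu_sum]
      norm_num
    exact (measurePreserving_pi _ _ hrow).map_eq
  -- the event
  set S : (Fin t → ℝ) → ℝ := fun y => ∑ i, (y i)^2 with hS_def
  have hSmeas : Measurable S := Finset.measurable_sum _ fun i _ => (measurable_pi_apply i).pow_const 2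
  set E : Set (Fin t → ℝ) := {y | S y < (1-ε)^2 ∨ (1+ε)^2 < S y} with hE_def
  have hEmeas : MeasurableSet E :=
    (measurableSet_lt hSmeas measurable_const).union (measurableSet_lt measurable_const hSmeas)
  have hevent : {G : Fin t → Fin d → ℝ | ‖appJL G x‖ ∉ Set.Icc ((1 - ε) * ‖x‖) ((1 + ε) * ‖x‖)}
      = Y ⁻¹' E := by
    ext G
    simp only [Set.mem_setOf_eq, Set.mem_preimage, hE_def]
    have hxu : appJL G x = ‖x‖ • appJL G u := by
      ext i
      have : appJL G x i = ‖x‖ * appJL G u i := by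
        simp only [appJL, hu_def, PiLp.smul_apply, smul_eq_mul, Finset.mul_sum]
        refine Finset.sum_congr rfl fun j _ => ?_
        field_simp
      rw [this]
      rfl
    have hnorm : ‖appJL G x‖ = ‖x‖ * ‖appJL G u‖ := by
      rw [hxu, norm_smul, Real.norm_eq_abs, abs_of_pos hx]
    have hw : ‖appJL G u‖ = Real.sqrt (S (Y G)) := by
      rw [EuclideanSpace.norm_eq]
      congr 1
      refine Finset.sum_congr rfl fun i _ => ?_
      rw [Real.norm_eq_abs, sq_abs]
      rfl
    have hSnn : 0 ≤ S (Y G) := Finset.sum_nonneg fun i _ => sq_nonneg _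
    rw [Set.mem_Icc, not_and_or, not_le, not_le, hnorm, hw]
    have e1 : ‖x‖ * Real.sqrt (S (Y G)) < (1 - ε) * ‖x‖ ↔ S (Y G) < (1-ε)^2 := by
      rw [mul_comm (‖x‖), mul_lt_mul_iff_left₀ hx]
      exact Real.sqrt_lt' (by linarith)
    have e2 : (1 + ε) * ‖x‖ < ‖x‖ * Real.sqrt (S (Y G)) ↔ (1+ε)^2 < S (Y G) := by
      rw [mul_comm (‖x‖), mul_lt_mul_iff_left₀ hx]
      exact Real.lt_sqrt (by linarith)
    rw [e1, e2]
  rw [hevent, ← Measure.map_apply hYmeas hEmeas, hmap]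
  -- ### Estimation over the pi-Gaussian measure
  have hb0 : (0:ℝ) < (1+ε)^2 := by positivity
  set c : ℝ := (1 - ε) / (1 + ε) with hc_def
  have hc0 : (0:ℝ) < c := div_pos (by linarith) (by linarith)
  have hc1 : c < 1 := by rw [hc_def, div_lt_one (by linarith)]; linarith
  set cn : ℝ≥0 := ⟨c, hc0.le⟩ with hcn_def
  have hcn : cn ≠ 0 := by
    simp only [hcn_def, ne_eq, ← NNReal.coe_eq_zero]
    exact ne_of_gt hc0
  set rn : ℝ≥0 := cn ^ 2 with hrn_def
  have hrn : rn ≠ 0 := pow_ne_zero 2 hcn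
  have hrnc : ((rn:ℝ)) = c^2 := by
    rw [hrn_def]
    push_cast
    rfl
  set vR : ℝ := (v : ℝ) with hvR_def
  have hvR : vR = (t:ℝ)⁻¹ := by
    rw [hvR_def, hv_def]
    push_cast
    rfl
  have hvR0 : 0 < vR := by rw [hvR]; positivity
  set θ : ℝ := (1 - (rn:ℝ)) * (2*vR)⁻¹ with hθ_def
  have hθ0 : 0 ≤ θ := by
    apply mul_nonneg
    · rw [hrnc]; nlinarith
    · positivity
  set ρ : ℝ → ℝ≥0∞ :=
    fun z => ENNReal.ofReal (Real.sqrt rn * Real.exp ((1 - (rn:ℝ)) * z^2 * (2*vR)⁻¹)) with hρ_def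
  have hρmeas : Measurable ρ := by
    rw [hρ_def]; fun_prop
  set V : ℝ≥0 := v / rn with hV_def
  set πV : Measure (Fin t → ℝ) := Measure.pi (fun _ : Fin t => gaussianReal 0 V) with hπV_def
  have hpiwd : πV = π.withDensity (fun y => ∏ i, ρ (y i)) :=
    pi_gauss_withDensity t v V ρ hρmeas (gauss_withDensity_tilt v rn hv hrn)
  -- the scaling map
  have hmapφ : Measure.map (fun (y : Fin t → ℝ) i => c * y i) πV = π := by
    refine (measurePreserving_pi (fun _ : Fin t => gaussianReal 0 V)
      (fun _ : Fin t => gaussianReal 0 v) (f := fun _ z => c * z)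
      (fun _ => ⟨(show Measurable fun z : ℝ => c * z by fun_prop), ?_⟩)).map_eq
    rw [gaussianReal_map_const_mul c, mul_zero]
    congr 1
    have h1 : (⟨c^2, sq_nonneg c⟩ : ℝ≥0) = rn := by
      rw [hrn_def]
      ext
      push_cast
      rfl
    rw [show ∀ p, NNReal.mk (c^2) p = rn from fun p => h1, hV_def, mul_comm, div_mul_cancel₀ _ hrn]
  -- sets
  set E1 : Set (Fin t → ℝ) := {y | (1+ε)^2 < S y} with hE1_def
  set E2 : Set (Fin t → ℝ) := {y | S y < (1-ε)^2} with hE2_def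
  set E3 : Set (Fin t → ℝ) := {y | S y < (1+ε)^2} with hE3_def
  have hE1meas : MeasurableSet E1 := measurableSet_lt measurable_const hSmeas
  have hE2meas : MeasurableSet E2 := measurableSet_lt hSmeas measurable_const
  have hE3meas : MeasurableSet E3 := measurableSet_lt hSmeas measurable_const
  have hEsplit : E = E2 ∪ E1 := Set.setOf_or
  have hsplit : π E ≤ π E2 + π E1 := by
    rw [hEsplit]
    exact measure_union_le _ _
  -- scaling identity
  have hkey : c^2 * (1+ε)^2 = (1-ε)^2 := by
    rw [hc_def]
    field_simp
  have hscale : π E2 = πV E3 := by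
    rw [← hmapφ, Measure.map_apply (measurable_pi_lambda _ fun i =>
      (measurable_pi_apply i).const_mul c) hE2meas]
    congr 1
    ext y
    simp only [hE2_def, hE3_def, Set.mem_preimage, Set.mem_setOf_eq]
    have hSc : S (fun i => c * y i) = c^2 * S y := by
      rw [hS_def]
      simp only
      rw [Finset.mul_sum]
      exact Finset.sum_congr rfl fun i _ => by ring
    rw [hSc, ← hkey, mul_lt_mul_iff_right₀ (by positivity)]
  -- pointwise exponential bound
  set η : ℝ := (2*ε + ε^2)/(1+ε)^2 with hη_def
  have hη0 : 0 ≤ η := by positivity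
  have hη1 : η < 1 := by
    rw [hη_def, div_lt_one hb0]
    nlinarith
  set μh : ℝ := (t:ℝ) * η / 2 with hμh_def
  have hμh0 : 0 ≤ μh := by positivity
  have hμhb : μh * (1+ε)^2 = (t:ℝ) * (2*ε+ε^2) / 2 := by
    rw [hμh_def, hη_def]
    field_simp
  have hθb : θ * (1+ε)^2 = 2 * ε * (t:ℝ) := by
    have htne : (t:ℝ) ≠ 0 := ne_of_gt htpos
    have h2v : (2*vR)⁻¹ = (t:ℝ)/2 := by
      rw [hvR, show (2*((t:ℝ))⁻¹) = 2/(t:ℝ) by ring, inv_div]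
    have h4 : (1 - c^2) * (1+ε)^2 = 4*ε := by linear_combination -hkey
    rw [hθ_def, hrnc, h2v]
    linear_combination ((t:ℝ)/2) * h4
  have hL1 := aux_log_one_sub ε hε0.le hε1
  have hL2 := aux_log_one_add ε hε0.le
  have hlogc : Real.log c = Real.log (1-ε) - Real.log (1+ε) :=
    Real.log_div (by linarith) (by linarith)
  have hlog1p : 0 ≤ Real.log (1+ε) := Real.log_nonneg (by linarith)
  have hlog1m : Real.log (1-ε) ≤ -(ε + ε^2/2) := by linarith
  have hA : (t:ℝ) * Real.log c + μh * (1+ε)^2 ≤ 0 := by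
    rw [hμhb]
    have hlc : Real.log c ≤ -(ε + ε^2/2) := by rw [hlogc]; linarith
    have h1 : (t:ℝ) * Real.log c ≤ (t:ℝ) * (-(ε + ε^2/2)) :=
      mul_le_mul_of_nonneg_left hlc htpos.le
    have h2 : (t:ℝ) * (-(ε + ε^2/2)) + (t:ℝ) * (2*ε+ε^2) / 2 = 0 := by ring
    linarith
  have hB : (t:ℝ) * Real.log c + θ * (1+ε)^2 ≤ 0 := by
    rw [hθb]
    have hlc : Real.log c ≤ -(2*ε) := by rw [hlogc]; linarith
    have h1 : (t:ℝ) * Real.log c ≤ (t:ℝ) * (-(2*ε)) :=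
      mul_le_mul_of_nonneg_left hlc htpos.le
    have h2 : (t:ℝ) * (-(2*ε)) + 2 * ε * (t:ℝ) = 0 := by ring
    linarith
  set g : (Fin t → ℝ) → ℝ≥0∞ :=
    fun y => ENNReal.ofReal (Real.exp (μh * (S y - (1+ε)^2))) with hg_def
  have hpoint : ∀ y, E3.indicator (fun y => ∏ i, ρ (y i)) y
      + E1.indicator (fun _ => (1:ℝ≥0∞)) y ≤ g y := by
    intro y
    have hs0 : 0 ≤ S y := Finset.sum_nonneg fun i _ => sq_nonneg _
    rcases lt_trichotomy (S y) ((1+ε)^2) with hlt | heq | hgt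
    · rw [Set.indicator_of_mem (by exact hlt) , Set.indicator_of_notMem (by
        simp only [hE1_def, Set.mem_setOf_eq, not_lt]; exact hlt.le), add_zero]
      have hprod : ∏ i, ρ (y i)
          = ENNReal.ofReal (c ^ t * Real.exp (θ * S y)) := by
        rw [hρ_def]
        rw [← ENNReal.ofReal_prod_of_nonneg (fun i _ => by positivity)]
        congr 1
        rw [Finset.prod_mul_distrib, Finset.prod_const, ← Real.exp_sum]
        have h1 : Real.sqrt (rn:ℝ) = c := by
          rw [hrnc, Real.sqrt_sq hc0.le]
        rw [h1]
        congr 1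
        · simp
        · congr 1
          rw [hS_def, hθ_def]
          simp only
          rw [Finset.mul_sum]
          exact Finset.sum_congr rfl fun i _ => by ring
      rw [hprod, hg_def]
      apply ENNReal.ofReal_le_ofReal
      have hct : c ^ t = Real.exp ((t:ℝ) * Real.log c) := by
        rw [Real.exp_nat_mul, Real.exp_log hc0]
      rw [hct, ← Real.exp_add, Real.exp_le_exp]
      set s : ℝ := S y
      set b : ℝ := (1+ε)^2
      have hid : (t:ℝ)*Real.log c + θ*s - μh*(s-b)
          = (1 - s/b)*((t:ℝ)*Real.log c + μh*b) + (s/b)*((t:ℝ)*Real.log c + θ*b) := by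
        field_simp
        ring
      have hw1 : 0 ≤ 1 - s/b := by
        rw [sub_nonneg, div_le_one hb0]
        exact hlt.le
      have hw2 : 0 ≤ s/b := by positivity
      nlinarith [mul_nonpos_of_nonneg_of_nonpos hw1 hA, mul_nonpos_of_nonneg_of_nonpos hw2 hB]
    · rw [Set.indicator_of_notMem (by
          simp only [hE3_def, Set.mem_setOf_eq, not_lt]; exact le_of_eq heq.symm),
        Set.indicator_of_notMem (by
          simp only [hE1_def, Set.mem_setOf_eq, not_lt]; exact le_of_eq heq), add_zero]
      exact zero_le
    · rw [Set.indicator_of_notMem (by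
          simp only [hE3_def, Set.mem_setOf_eq, not_lt]; exact hgt.le),
        Set.indicator_of_mem (by exact hgt), zero_add, hg_def]
      rw [show (1:ℝ≥0∞) = ENNReal.ofReal 1 by simp]
      apply ENNReal.ofReal_le_ofReal
      rw [Real.one_le_exp_iff]
      nlinarith
  -- assembling
  have hprodmeas : Measurable fun y : Fin t → ℝ => ∏ i, ρ (y i) :=
    Finset.measurable_prod _ fun i _ => hρmeas.comp (measurable_pi_apply i)
  have hsum : π E2 + π E1 ≤ ∫⁻ y, g y ∂π := by
    rw [hscale, hpiwd, withDensity_apply _ hE3meas, ← lintegral_indicator hE3meas,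
      ← lintegral_indicator_one hE1meas, ← lintegral_add_left (hprodmeas.indicator hE3meas)]
    exact lintegral_mono hpoint
  -- compute the mgf
  have h2mv : 2 * μh * vR = η := by
    have htne : (t:ℝ) ≠ 0 := ne_of_gt htpos
    rw [hμh_def, hvR]
    field_simp
  have hmgf : ∫⁻ y, g y ∂π = ENNReal.ofReal (Real.exp (-(μh * (1+ε)^2)) * (1+ε)^t) := by
    have hgrw : ∀ y, g y = ENNReal.ofReal (Real.exp (-(μh*(1+ε)^2)))
        * ∏ i, ENNReal.ofReal (Real.exp (μh * (y i)^2)) := by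
      intro y
      have harg : μh * (S y - (1+ε)^2) = -(μh*(1+ε)^2) + ∑ i, μh * (y i)^2 := by
        rw [hS_def]
        simp only
        rw [mul_sub, Finset.mul_sum]
        ring
      rw [hg_def]
      simp only
      rw [harg, Real.exp_add, Real.exp_sum, ENNReal.ofReal_mul (Real.exp_pos _).le,
        ENNReal.ofReal_prod_of_nonneg (fun i _ => (Real.exp_pos _).le)]
    rw [lintegral_congr hgrw]
    have hfm : Measurable fun y : Fin t → ℝ => ∏ i, ENNReal.ofReal (Real.exp (μh * (y i)^2)) :=
      Finset.measurable_prod _ fun i _ => by fun_prop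
    rw [lintegral_const_mul _ hfm,
      hπ_def, lintegral_pi_prod t _ (fun _ => inferInstance)
        (fun _ z => ENNReal.ofReal (Real.exp (μh * z^2))) (fun i => by fun_prop)]
    have hcoord : ∫⁻ z : ℝ, ENNReal.ofReal (Real.exp (μh * z^2)) ∂(gaussianReal 0 v)
        = ENNReal.ofReal (1+ε) := by
      rw [gauss_mgf_sq v hv μh (by rw [← hvR_def, h2mv]; exact hη1)]
      congr 1
      have h1 : 1 - 2*μh*(v:ℝ) = ((1+ε)^2)⁻¹ := by
        rw [← hvR_def, h2mv, hη_def]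
        field_simp
        ring
      rw [h1, Real.sqrt_inv, Real.sqrt_sq (by linarith), inv_inv]
    rw [Finset.prod_congr rfl (fun (i : Fin t) _ => hcoord), Finset.prod_const, Finset.card_univ,
      Fintype.card_fin, ← ENNReal.ofReal_pow (by linarith), ← ENNReal.ofReal_mul (Real.exp_pos _).le]
  -- final numeric bound
  have hfinal : Real.exp (-(μh * (1+ε)^2)) * (1+ε)^t ≤ Real.exp (-(ε ^ 2 * t) / 8) := by
    have h1 : (1+ε)^t ≤ Real.exp (ε * t) := by
      calc (1+ε)^t ≤ (Real.exp ε)^t := by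
            apply pow_le_pow_left₀ (by linarith)
            linarith [Real.add_one_le_exp ε]
        _ = Real.exp (ε * t) := by
            rw [mul_comm, ← Real.exp_nat_mul]
    calc Real.exp (-(μh * (1+ε)^2)) * (1+ε)^t
        ≤ Real.exp (-(μh * (1+ε)^2)) * Real.exp (ε * t) := by
          apply mul_le_mul_of_nonneg_left h1 (Real.exp_pos _).le
      _ = Real.exp (ε * t - (t:ℝ) * (2*ε+ε^2) / 2) := by
          rw [hμhb, ← Real.exp_add]
          ring_nf
      _ ≤ Real.exp (-(ε ^ 2 * t) / 8) := by
          rw [Real.exp_le_exp]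
          nlinarith [sq_nonneg ε, htpos.le, mul_nonneg (sq_nonneg ε) htpos.le]
  calc π E ≤ π E2 + π E1 := hsplit
    _ ≤ ∫⁻ y, g y ∂π := hsum
    _ = ENNReal.ofReal (Real.exp (-(μh * (1+ε)^2)) * (1+ε)^t) := hmgf
    _ ≤ ENNReal.ofReal (Real.exp (-(ε ^ 2 * t) / 8)) := ENNReal.ofReal_le_ofReal hfinal
end

section
/- Let ε ∈ (0,1), t, d ∈ ℕ with t ≥ 1, and let N ⊂ ℝ^d be a finite set satisfying |N|² ≤ e^{ε²·t/16}. For a Gaussian JL map G ∈ ℝ^{t×d}, define the random variable β(G) as the infimum of all β ≥ 0 such that ‖Gu − Gv‖ ≥ (1 − ε − β·ε)·‖u − v‖ for all u, v ∈ N. Then E[ β(G) ] ≤ (8/(ε²·t))·e^{−ε²·t/16}. -/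
open MeasureTheory ProbabilityTheory Metric
open scoped ENNReal NNReal Classical

open Real

lemma gauss_laplace {v : ℝ≥0} (hv : v ≠ 0) {lam : ℝ} (hlam : 0 ≤ lam) (c b : ℝ) :
    ∫ x, rexp (-(lam * (c * x + b) ^ 2)) ∂(gaussianReal 0 v)
      = (Real.sqrt (1 + 2 * lam * c ^ 2 * v))⁻¹
        * rexp (-(lam * b ^ 2 / (1 + 2 * lam * c ^ 2 * v))) := by
  have hv' : (0:ℝ) < v := lt_of_le_of_ne v.coe_nonneg (by exact_mod_cast (Ne.symm hv))
  have hvne : (v:ℝ) ≠ 0 := ne_of_gt hv'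
  set A : ℝ := 1 + 2 * lam * c ^ 2 * v with hA
  have hA0 : 0 < A := by positivity
  have hAne : A ≠ 0 := ne_of_gt hA0
  set p : ℝ := A / (2 * (v:ℝ)) with hp
  have hp0 : 0 < p := by positivity
  set m : ℝ := 2 * (v:ℝ) * lam * c * b / A with hm
  set r : ℝ := lam * b ^ 2 / A with hr
  rw [gaussianReal_of_var_ne_zero 0 hv]
  have hd : (volume : Measure ℝ).withDensity (gaussianPDF 0 v)
      = (volume : Measure ℝ).withDensity (fun x => ((gaussianPDFReal 0 v x).toNNReal : ℝ≥0∞)) := rfl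
  rw [hd, integral_withDensity_eq_integral_smul
    ((measurable_gaussianPDFReal 0 v).real_toNNReal) _]
  have hpne : p ≠ 0 := ne_of_gt hp0
  have hint : ∀ x : ℝ, ((gaussianPDFReal 0 v x).toNNReal : ℝ≥0) • rexp (-(lam * (c * x + b) ^ 2))
      = ((Real.sqrt (2 * (π * v)))⁻¹ * rexp (-r)) * rexp (-(p * (x + m) ^ 2)) := by
    intro x
    rw [NNReal.smul_def, Real.coe_toNNReal _ (gaussianPDFReal_nonneg 0 v x)]
    rw [gaussianPDFReal, smul_eq_mul]
    have key : -(x - 0) ^ 2 / (2 * (v:ℝ)) + -(lam * (c * x + b) ^ 2)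
        = -r + -(p * (x + m) ^ 2) := by
      rw [hm, hr, hp]
      field_simp
      rw [hA]
      ring
    rw [mul_assoc, ← Real.exp_add, key, Real.exp_add]; ring
  rw [integral_congr_ae (Filter.Eventually.of_forall hint)]
  rw [integral_const_mul]
  have htrans : ∫ x : ℝ, rexp (-(p * (x + m) ^ 2)) = ∫ x : ℝ, rexp (-(p * x ^ 2)) :=
    integral_add_right_eq_self (fun y => rexp (-(p * y ^ 2))) m
  rw [htrans]
  have hgauss : ∫ x : ℝ, rexp (-(p * x ^ 2)) = Real.sqrt (π / p) := by
    simpa [neg_mul] using integral_gaussian p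
  rw [hgauss]
  have hsq : (Real.sqrt (2 * (π * v)))⁻¹ * Real.sqrt (π / p) = (Real.sqrt A)⁻¹ := by
    rw [← Real.sqrt_inv, ← Real.sqrt_inv]
    rw [← Real.sqrt_mul (by positivity)]
    congr 1
    rw [hp]
    field_simp
  calc (Real.sqrt (2 * (π * v)))⁻¹ * rexp (-r) * Real.sqrt (π / p)
      = ((Real.sqrt (2 * (π * v)))⁻¹ * Real.sqrt (π / p)) * rexp (-r) := by ring
    _ = (Real.sqrt A)⁻¹ * rexp (-(lam * b ^ 2 / A)) := by rw [hsq, hr]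

lemma row_laplace {v : ℝ≥0} (hv : v ≠ 0) :
    ∀ {n : ℕ} (c : Fin n → ℝ) {lam : ℝ}, 0 ≤ lam → ∀ b : ℝ,
    ∫ g : Fin n → ℝ, rexp (-(lam * (∑ j, c j * g j + b) ^ 2))
        ∂(Measure.pi fun _ => gaussianReal 0 v)
      = (Real.sqrt (1 + 2 * lam * (∑ j, c j ^ 2) * v))⁻¹
        * rexp (-(lam * b ^ 2 / (1 + 2 * lam * (∑ j, c j ^ 2) * v))) := by
  intro n
  induction n with
  | zero =>
    intro c lam hlam b
    simp
  | succ n ih =>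
    intro c lam hlam b
    have hA1pos : 0 < 1 + 2 * lam * (∑ j : Fin n, c j.succ ^ 2) * (v:ℝ) := by positivity
    set A1 : ℝ := 1 + 2 * lam * (∑ j : Fin n, c j.succ ^ 2) * (v:ℝ) with hA1
    clear_value A1
    have hA1ne : A1 ≠ 0 := ne_of_gt hA1pos
    have hcont : Continuous (fun z : ℝ × (Fin n → ℝ) =>
        rexp (-(lam * (c 0 * z.1 + (∑ j : Fin n, c j.succ * z.2 j) + b) ^ 2))) := by
      fun_prop
    have hint : Integrable (fun z : ℝ × (Fin n → ℝ) =>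
        rexp (-(lam * (c 0 * z.1 + (∑ j : Fin n, c j.succ * z.2 j) + b) ^ 2)))
        ((gaussianReal 0 v).prod (Measure.pi fun _ : Fin n => gaussianReal 0 v)) := by
      refine (integrable_const (1:ℝ)).mono' hcont.aestronglyMeasurable ?_
      filter_upwards with z
      rw [norm_eq_abs, abs_of_pos (exp_pos _)]
      rw [Real.exp_le_one_iff]
      have : 0 ≤ lam * (c 0 * z.1 + (∑ j : Fin n, c j.succ * z.2 j) + b) ^ 2 :=
        mul_nonneg hlam (sq_nonneg _)
      linarith
    calc ∫ g : Fin (n+1) → ℝ, rexp (-(lam * (∑ j, c j * g j + b) ^ 2))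
          ∂(Measure.pi fun _ => gaussianReal 0 v)
        = ∫ z : ℝ × (Fin n → ℝ),
            rexp (-(lam * (c 0 * z.1 + (∑ j : Fin n, c j.succ * z.2 j) + b) ^ 2))
            ∂((gaussianReal 0 v).prod (Measure.pi fun _ : Fin n => gaussianReal 0 v)) := by
          rw [← ((measurePreserving_piFinSuccAbove
            (fun _ : Fin (n+1) => gaussianReal 0 v) 0).symm).integral_comp']
          congr 1
          ext z
          simp only [MeasurableEquiv.piFinSuccAbove_symm_apply, Fin.insertNthEquiv,
            Fin.insertNth_zero, Equiv.coe_fn_mk, Fin.sum_univ_succ, Fin.zero_succAbove, cast_eq,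
            Fin.cons_zero, Fin.cons_succ]
      _ = ∫ x : ℝ, ∫ y : Fin n → ℝ,
            rexp (-(lam * ((∑ j : Fin n, c j.succ * y j) + (c 0 * x + b)) ^ 2))
            ∂(Measure.pi fun _ : Fin n => gaussianReal 0 v) ∂(gaussianReal 0 v) := by
          rw [integral_prod _ hint]
          congr 1; ext x; congr 1; ext y; ring_nf
      _ = ∫ x : ℝ, (Real.sqrt A1)⁻¹ * rexp (-((lam / A1) * (c 0 * x + b) ^ 2))
            ∂(gaussianReal 0 v) := by
          congr 1; ext x
          rw [ih (fun j => c j.succ) hlam (c 0 * x + b)]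
          rw [← hA1]
          congr 2
          ring
      _ = (Real.sqrt A1)⁻¹ * ((Real.sqrt (1 + 2 * (lam / A1) * (c 0) ^ 2 * v))⁻¹
            * rexp (-((lam / A1) * b ^ 2 / (1 + 2 * (lam / A1) * (c 0) ^ 2 * v)))) := by
          rw [integral_const_mul, gauss_laplace hv (by positivity) (c 0) b]
      _ = (Real.sqrt (1 + 2 * lam * (∑ j, c j ^ 2) * v))⁻¹
          * rexp (-(lam * b ^ 2 / (1 + 2 * lam * (∑ j, c j ^ 2) * v))) := by
          have hkey : A1 * (1 + 2 * (lam / A1) * (c 0) ^ 2 * v)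
              = 1 + 2 * lam * (∑ j : Fin (n+1), c j ^ 2) * v := by
            field_simp
            rw [hA1, Fin.sum_univ_succ]
            ring
          have hBpos : 0 < 1 + 2 * (lam / A1) * c 0 ^ 2 * (v:ℝ) := by positivity
          have hexp : lam / A1 * b ^ 2 / (1 + 2 * (lam / A1) * c 0 ^ 2 * (v:ℝ))
              = lam * b ^ 2 / (A1 * (1 + 2 * (lam / A1) * c 0 ^ 2 * (v:ℝ))) := by
            field_simp
          rw [← mul_assoc, ← mul_inv, ← Real.sqrt_mul (le_of_lt hA1pos), hexp, hkey]

lemma integral_pi_prod {α : Type*} [MeasurableSpace α] (μ : Measure α) [IsProbabilityMeasure μ] :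
    ∀ {n : ℕ} (f : Fin n → α → ℝ),
    ∫ x : Fin n → α, ∏ i, f i (x i) ∂(Measure.pi fun _ => μ) = ∏ i, ∫ a, f i a ∂μ := by
  intro n
  induction n with
  | zero => intro f; simp
  | succ n ih =>
    intro f
    calc ∫ x : Fin (n+1) → α, ∏ i, f i (x i) ∂(Measure.pi fun _ => μ)
        = ∫ z : α × (Fin n → α), f 0 z.1 * ∏ i : Fin n, f i.succ (z.2 i)
            ∂(μ.prod (Measure.pi fun _ : Fin n => μ)) := by
          rw [← ((measurePreserving_piFinSuccAbove
            (fun _ : Fin (n+1) => μ) 0).symm).integral_comp']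
          congr 1; ext z
          simp only [MeasurableEquiv.piFinSuccAbove_symm_apply, Fin.insertNthEquiv,
            Fin.insertNth_zero, Equiv.coe_fn_mk, Fin.prod_univ_succ, Fin.zero_succAbove, cast_eq,
            Fin.cons_zero, Fin.cons_succ]
      _ = (∫ a, f 0 a ∂μ) * ∫ y : Fin n → α, ∏ i : Fin n, f i.succ (y i)
            ∂(Measure.pi fun _ : Fin n => μ) :=
          integral_prod_mul (f 0) (fun y : Fin n → α => ∏ i : Fin n, f i.succ (y i))
      _ = ∏ i, ∫ a, f i a ∂μ := by rw [ih, Fin.prod_univ_succ]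

lemma continuous_appJL {t d : ℕ} (x : EuclideanSpace ℝ (Fin d)) :
    Continuous fun G : Fin t → Fin d → ℝ => appJL G x := by
  unfold appJL
  exact (PiLp.continuous_toLp ..).comp (continuous_pi fun i => by fun_prop)

lemma gaussianJL_prob (t d : ℕ) : IsProbabilityMeasure (gaussianJL t d) := by
  unfold gaussianJL; infer_instance

lemma jl_laplace {t d : ℕ} (ht : 1 ≤ t) (x : EuclideanSpace ℝ (Fin d)) {lam : ℝ} (hlam : 0 ≤ lam) :
    ∫ G, rexp (-(lam * ‖appJL G x‖ ^ 2)) ∂(gaussianJL t d)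
      = ((Real.sqrt (1 + 2 * lam * (∑ j, x j ^ 2) * ((t:ℝ)⁻¹)))⁻¹) ^ t := by
  have htne : ((t:ℝ≥0))⁻¹ ≠ 0 := by
    simp only [ne_eq, inv_eq_zero, Nat.cast_eq_zero]
    omega
  have h1 : ∀ G : Fin t → Fin d → ℝ, rexp (-(lam * ‖appJL G x‖ ^ 2))
      = ∏ i, (fun row : Fin d → ℝ => rexp (-(lam * ((∑ j, x j * row j) + 0) ^ 2))) (G i) := by
    intro G
    have hnorm : ‖appJL G x‖ ^ 2 = ∑ i, ((∑ j, x j * G i j) + 0) ^ 2 := by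
      rw [EuclideanSpace.norm_eq, Real.sq_sqrt (by positivity)]
      refine Finset.sum_congr rfl fun i _ => ?_
      rw [Real.norm_eq_abs, sq_abs, add_zero]
      congr 1
      rw [appJL, PiLp.toLp_apply]
      exact Finset.sum_congr rfl fun j _ => mul_comm _ _
    rw [hnorm, Finset.mul_sum, ← Finset.sum_neg_distrib, Real.exp_sum]
  rw [integral_congr_ae (Filter.Eventually.of_forall h1)]
  unfold gaussianJL
  rw [integral_pi_prod (Measure.pi fun _ : Fin d => gaussianReal 0 (t : ℝ≥0)⁻¹)
    (fun _ (row : Fin d → ℝ) => rexp (-(lam * ((∑ j, x j * row j) + 0) ^ 2)))]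
  rw [Finset.prod_const, Finset.card_univ, Fintype.card_fin]
  congr 1
  rw [row_laplace htne (fun j => x j) hlam 0]
  simp [NNReal.coe_inv]

lemma chernoff_arith {g mu lg : ℝ} (hg0 : 0 < g) (hg1 : g < 1)
    (hmudef : mu = g / (2 * (1 - g))) (hlg : 1 - (1 + mu)⁻¹ ≤ lg) :
    mu * (1 - g) - lg ≤ -(g ^ 2 / 4) := by
  have h1g : (0:ℝ) < 1 - g := by linarith
  have h2g : (0:ℝ) < 2 - g := by linarith
  have hmu1g : mu * (1 - g) = g / 2 := by rw [hmudef]; field_simp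
  have hqval : 1 - (1 + mu)⁻¹ = g / (2 - g) := by
    rw [hmudef]
    rw [show 1 + g / (2 * (1 - g)) = (2 - g) / (2 * (1 - g)) by field_simp; ring]
    rw [inv_div]
    field_simp
    ring
  have hcube : (0:ℝ) ≤ g ^ 3 := by positivity
  have hfin : g / 2 + g ^ 2 / 4 ≤ g / (2 - g) := by
    rw [le_div_iff₀ h2g]; nlinarith [hcube]
  rw [hmu1g]
  rw [hqval] at hlg
  linarith

lemma jl_tail {t d : ℕ} (ht : 1 ≤ t) (x : EuclideanSpace ℝ (Fin d)) (hx : x ≠ 0)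
    {δ : ℝ} (hδ0 : 0 < δ) (hδ1 : δ < 1) :
    ((gaussianJL t d) {G | ‖appJL G x‖ < (1 - δ) * ‖x‖}).toReal
      ≤ rexp (-(δ ^ 2 * t / 8)) := by
  haveI := gaussianJL_prob t d
  have htpos : (0:ℝ) < t := by exact_mod_cast Nat.lt_of_lt_of_le Nat.zero_lt_one ht
  have hxpos : 0 < ‖x‖ := norm_pos_iff.mpr hx
  have hs2 : (0:ℝ) < ‖x‖ ^ 2 := by positivity
  set γ : ℝ := 2 * δ - δ ^ 2 with hγdef
  have hγ0 : 0 < γ := by rw [hγdef]; nlinarith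
  have hγ1 : γ < 1 := by rw [hγdef]; nlinarith
  have hγδ : δ ≤ γ := by rw [hγdef]; nlinarith
  clear_value γ
  have h1γ : 0 < 1 - γ := by linarith
  have hγδ2 : δ ^ 2 ≤ γ ^ 2 := by nlinarith
  set mu : ℝ := γ / (2 * (1 - γ)) with hmudef
  clear_value mu
  have hmu0 : 0 ≤ mu := by rw [hmudef]; positivity
  have h1mu : (0:ℝ) < 1 + mu := by linarith
  set lam : ℝ := mu * t / (2 * ‖x‖ ^ 2) with hlamdef
  clear_value lam
  have hlam0 : 0 ≤ lam := by
    rw [hlamdef]; positivity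
  have h2γ : (0:ℝ) < 2 - γ := by linarith
  have hsum : (∑ j, x j ^ 2) = ‖x‖ ^ 2 := by
    rw [EuclideanSpace.norm_eq, Real.sq_sqrt (by positivity)]
    exact Finset.sum_congr rfl fun j _ => by rw [Real.norm_eq_abs, sq_abs]
  have hA : 1 + 2 * lam * (∑ j, x j ^ 2) * ((t:ℝ)⁻¹) = 1 + mu := by
    rw [hsum, hlamdef]
    field_simp
  -- the Laplace transform value
  have hL : ∫ G, rexp (-(lam * ‖appJL G x‖ ^ 2)) ∂(gaussianJL t d)
      = ((Real.sqrt (1 + mu))⁻¹) ^ t := by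
    rw [jl_laplace ht x hlam0, hA]
  -- event and Markov
  set E : Set (Fin t → Fin d → ℝ) := {G | ‖appJL G x‖ < (1 - δ) * ‖x‖} with hEdef
  have hEmeas : MeasurableSet E :=
    measurableSet_lt ((continuous_appJL x).norm.measurable) measurable_const
  have hcont : Continuous fun G : Fin t → Fin d → ℝ => rexp (-(lam * ‖appJL G x‖ ^ 2)) := by
    have := (continuous_appJL (t := t) x).norm
    fun_prop
  have hfint : Integrable (fun G => rexp (-(lam * ‖appJL G x‖ ^ 2))) (gaussianJL t d) := by
    refine (integrable_const (1:ℝ)).mono' hcont.aestronglyMeasurable ?_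
    filter_upwards with G
    rw [norm_eq_abs, abs_of_pos (exp_pos _), Real.exp_le_one_iff]
    have : 0 ≤ lam * ‖appJL G x‖ ^ 2 := by positivity
    linarith
  have hmarkov : ((gaussianJL t d) E).toReal * rexp (-(lam * ((1 - γ) * ‖x‖ ^ 2)))
      ≤ ((Real.sqrt (1 + mu))⁻¹) ^ t := by
    rw [← hL]
    have h1 : ((gaussianJL t d) E).toReal * rexp (-(lam * ((1 - γ) * ‖x‖ ^ 2)))
        = ∫ _ in E, rexp (-(lam * ((1 - γ) * ‖x‖ ^ 2))) ∂(gaussianJL t d) := by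
      rw [setIntegral_const, smul_eq_mul, measureReal_def]
    rw [h1]
    have h2 : ∫ _ in E, rexp (-(lam * ((1 - γ) * ‖x‖ ^ 2))) ∂(gaussianJL t d)
        ≤ ∫ G in E, rexp (-(lam * ‖appJL G x‖ ^ 2)) ∂(gaussianJL t d) := by
      refine setIntegral_mono_on (integrable_const _).integrableOn
        hfint.integrableOn hEmeas ?_
      intro G hG
      have hGE : ‖appJL G x‖ < (1 - δ) * ‖x‖ := hG
      have hsq : ‖appJL G x‖ ^ 2 ≤ (1 - γ) * ‖x‖ ^ 2 := by
        have h3 : ‖appJL G x‖ ^ 2 ≤ ((1 - δ) * ‖x‖) ^ 2 := by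
          apply pow_le_pow_left₀ (norm_nonneg _) hGE.le
        have h4 : ((1 - δ) * ‖x‖) ^ 2 = (1 - γ) * ‖x‖ ^ 2 := by rw [hγdef]; ring
        linarith
      have := mul_le_mul_of_nonneg_left hsq hlam0
      exact Real.exp_le_exp.mpr (by linarith)
    exact h2.trans (setIntegral_le_integral hfint
      (Filter.Eventually.of_forall fun G => (exp_pos _).le))
  -- convert to exponentials
  have hsqrt : ((Real.sqrt (1 + mu))⁻¹) ^ t = rexp (-(Real.log (1 + mu) / 2 * t)) := by
    rw [show (1:ℝ) + mu = rexp (Real.log (1 + mu)) from (Real.exp_log h1mu).symm]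
    rw [← Real.exp_half, ← Real.exp_neg, ← Real.exp_nat_mul]
    rw [Real.log_exp]
    ring_nf
  have hlamval : lam * ((1 - γ) * ‖x‖ ^ 2) = mu * (1 - γ) * t / 2 := by
    rw [hlamdef]; field_simp
  have hfinal : ((gaussianJL t d) E).toReal
      ≤ rexp (mu * (1 - γ) * t / 2 - Real.log (1 + mu) / 2 * t) := by
    have hme : ((gaussianJL t d) E).toReal
        ≤ ((Real.sqrt (1 + mu))⁻¹) ^ t * rexp (lam * ((1 - γ) * ‖x‖ ^ 2)) := by
      have hepos : 0 < rexp (-(lam * ((1 - γ) * ‖x‖ ^ 2))) := exp_pos _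
      rw [← le_div_iff₀ hepos] at hmarkov
      rwa [div_eq_mul_inv, ← Real.exp_neg, neg_neg] at hmarkov
    rw [hsqrt, ← Real.exp_add, hlamval] at hme
    convert hme using 2
    ring
  refine hfinal.trans ?_
  rw [Real.exp_le_exp]
  -- key analytic inequality
  have hlog : 1 - (1 + mu)⁻¹ ≤ Real.log (1 + mu) := by
    have h5 := Real.log_le_sub_one_of_pos (show (0:ℝ) < (1 + mu)⁻¹ by positivity)
    rw [Real.log_inv] at h5
    linarith
  have hkey : mu * (1 - γ) - Real.log (1 + mu) ≤ -(γ ^ 2 / 4) :=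
    chernoff_arith hγ0 hγ1 hmudef hlog
  have ht2 : mu * (1 - γ) * t / 2 - Real.log (1 + mu) / 2 * t
      = (mu * (1 - γ) - Real.log (1 + mu)) * t / 2 := by ring
  rw [ht2]
  have e1 : (mu * (1 - γ) - Real.log (1 + mu)) * t ≤ (-(γ ^ 2 / 4)) * t :=
    mul_le_mul_of_nonneg_right hkey htpos.le
  have e2 : δ ^ 2 * t ≤ γ ^ 2 * t := mul_le_mul_of_nonneg_right hγδ2 htpos.le
  linarith

lemma appJL_sub {t d : ℕ} (G : Fin t → Fin d → ℝ) (u v : EuclideanSpace ℝ (Fin d)) :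
    appJL G u - appJL G v = appJL G (u - v) := by
  ext i
  simp only [appJL, PiLp.toLp_apply, PiLp.sub_apply, mul_sub, Finset.sum_sub_distrib]


set_option maxHeartbeats 1000000 in
/-- Expected maximum contraction over a fixed net N with |N|² ≤ e^{ε²t/16}:
defining β(G) as the least β ≥ 0 such that all pairwise distances in N contract by at
most a (1 − ε − βε) factor, we have E[β] ≤ (8/(ε²t))·e^{−ε²t/16}. -/
theorem expected_net_contraction_bound {d t : ℕ} (ht : 1 ≤ t)
    (ε : ℝ) (hε : ε ∈ Set.Ioo (0 : ℝ) 1)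
    (N : Finset (EuclideanSpace ℝ (Fin d)))
    (hN : ((N.card : ℝ)) ^ 2 ≤ Real.exp (ε ^ 2 * t / 16)) :
    ∫ G, sInf {β : ℝ | 0 ≤ β ∧ ∀ u ∈ N, ∀ v ∈ N,
        (1 - ε - β * ε) * ‖u - v‖ ≤ ‖appJL G u - appJL G v‖} ∂(gaussianJL t d) ≤
      (8 / (ε ^ 2 * t)) * Real.exp (-(ε ^ 2 * t) / 16) := by
  haveI := gaussianJL_prob t d
  obtain ⟨hε0, hε1⟩ := hε
  have htpos : (0:ℝ) < t := by exact_mod_cast Nat.lt_of_lt_of_le Nat.zero_lt_one ht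
  set μ := gaussianJL t d with hμdef
  -- the per-pair quantity
  set q : (EuclideanSpace ℝ (Fin d) × EuclideanSpace ℝ (Fin d)) → (Fin t → Fin d → ℝ) → ℝ :=
    fun p G => ((1 - ε) * ‖p.1 - p.2‖ - ‖appJL G p.1 - appJL G p.2‖) / (ε * ‖p.1 - p.2‖)
    with hqdef
  -- pointwise computation of the sInf
  have hpoint : ∀ G, sInf {β : ℝ | 0 ≤ β ∧ ∀ u ∈ N, ∀ v ∈ N,
      (1 - ε - β * ε) * ‖u - v‖ ≤ ‖appJL G u - appJL G v‖}
      = ((((N ×ˢ N).sup fun p => Real.toNNReal (q p G)) : ℝ≥0) : ℝ) := by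
    intro G
    have hset : {β : ℝ | 0 ≤ β ∧ ∀ u ∈ N, ∀ v ∈ N,
        (1 - ε - β * ε) * ‖u - v‖ ≤ ‖appJL G u - appJL G v‖}
        = Set.Ici ((((N ×ˢ N).sup fun p => Real.toNNReal (q p G)) : ℝ≥0) : ℝ) := by
      ext β
      simp only [Set.mem_setOf_eq, Set.mem_Ici]
      constructor
      · rintro ⟨hβ0, h⟩
        rw [← Real.le_toNNReal_iff_coe_le hβ0]
        refine Finset.sup_le fun p hp => ?_
        rw [Real.toNNReal_le_toNNReal_iff hβ0]
        obtain ⟨hu, hv⟩ := Finset.mem_product.mp hp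
        by_cases huv : p.1 = p.2
        · simp [hqdef, huv, sub_self, norm_zero, mul_zero, div_zero, hβ0]
        · have hδpos : 0 < ‖p.1 - p.2‖ := by
            rw [norm_pos_iff]; exact sub_ne_zero.mpr huv
          have hd : 0 < ε * ‖p.1 - p.2‖ := mul_pos hε0 hδpos
          rw [hqdef, div_le_iff₀ hd]
          have := h p.1 hu p.2 hv
          nlinarith
      · intro hB
        have hβ0 : 0 ≤ β :=
          le_trans (NNReal.coe_nonneg _) hB
        refine ⟨hβ0, fun u hu v hv => ?_⟩
        by_cases huv : u = v
        · subst huv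
          have h0 : u - u = 0 := sub_self u
          rw [h0, norm_zero, mul_zero]
          exact norm_nonneg _
        · have hδpos : 0 < ‖u - v‖ := by
            rw [norm_pos_iff]; exact sub_ne_zero.mpr huv
          have hd : 0 < ε * ‖u - v‖ := mul_pos hε0 hδpos
          have hmem : (u, v) ∈ N ×ˢ N := Finset.mem_product.mpr ⟨hu, hv⟩
          have hsup : Real.toNNReal (q (u, v) G)
              ≤ (N ×ˢ N).sup fun p => Real.toNNReal (q p G) :=
            Finset.le_sup (f := fun p => Real.toNNReal (q p G)) hmem
          have hq : q (u, v) G ≤ β :=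
            le_trans (Real.le_coe_toNNReal _)
              (le_trans (NNReal.coe_le_coe.mpr hsup) hB)
          rw [hqdef, div_le_iff₀ hd] at hq
          nlinarith
    rw [hset, csInf_Ici]
  rw [integral_congr_ae (Filter.Eventually.of_forall hpoint)]
  -- continuity and integrability of the per-pair terms
  have hqcont : ∀ p, Continuous fun G : Fin t → Fin d → ℝ => max (q p G) 0 := by
    intro p
    refine Continuous.max ?_ continuous_const
    rw [hqdef]
    exact (continuous_const.sub
      ((continuous_appJL p.1).sub (continuous_appJL p.2)).norm).div_const _
  have hqbdd : ∀ p G, max (q p G) 0 ≤ (1 - ε) / ε := by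
    intro p G
    have hc : 0 ≤ (1 - ε) / ε := div_nonneg (by linarith) hε0.le
    refine max_le ?_ hc
    by_cases huv : p.1 = p.2
    · simp [hqdef, huv, sub_self, norm_zero, mul_zero, div_zero, hc]
    · have hδpos : 0 < ‖p.1 - p.2‖ := by
        rw [norm_pos_iff]; exact sub_ne_zero.mpr huv
      have hd : 0 < ε * ‖p.1 - p.2‖ := mul_pos hε0 hδpos
      rw [hqdef, div_le_iff₀ hd]
      have h1 : 0 ≤ ‖appJL G p.1 - appJL G p.2‖ := norm_nonneg _
      have h2 : (1 - ε) / ε * (ε * ‖p.1 - p.2‖) = (1 - ε) * ‖p.1 - p.2‖ := by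
        field_simp
      nlinarith [norm_nonneg (appJL G p.1 - appJL G p.2)]
  have hint_p : ∀ p, Integrable (fun G => max (q p G) 0) μ := by
    intro p
    refine (integrable_const ((1 - ε) / ε)).mono' (hqcont p).aestronglyMeasurable ?_
    filter_upwards with G
    rw [Real.norm_eq_abs, abs_of_nonneg (le_max_right _ _)]
    exact hqbdd p G
  -- bound the sup by the sum
  have hsup_le : ∀ G, ((((N ×ˢ N).sup fun p => Real.toNNReal (q p G)) : ℝ≥0) : ℝ)
      ≤ ∑ p ∈ N ×ˢ N, max (q p G) 0 := by
    intro G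
    have h1 : ((N ×ˢ N).sup fun p => Real.toNNReal (q p G))
        ≤ ∑ p ∈ N ×ˢ N, Real.toNNReal (q p G) :=
      Finset.sup_le fun p hp =>
        Finset.single_le_sum (f := fun p => Real.toNNReal (q p G)) (fun _ _ => zero_le) hp
    refine (NNReal.coe_le_coe.mpr h1).trans (le_of_eq ?_)
    rw [NNReal.coe_sum]
    exact Finset.sum_congr rfl fun p _ => Real.coe_toNNReal' _
  -- per-pair expectation bound via layer cake
  have hpair : ∀ p ∈ N ×ˢ N, ∫ G, max (q p G) 0 ∂μ
      ≤ rexp (-(ε ^ 2 * t / 8)) * (4 / (ε ^ 2 * t)) := by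
    intro p hp
    have hrhs0 : 0 ≤ rexp (-(ε ^ 2 * t / 8)) * (4 / (ε ^ 2 * t)) := by positivity
    by_cases huv : p.1 = p.2
    · have : (fun G : Fin t → Fin d → ℝ => max (q p G) 0) = fun _ => 0 := by
        funext G
        simp [hqdef, huv, sub_self, norm_zero, mul_zero, div_zero]
      rw [this, integral_zero]
      exact hrhs0
    · have hxne : p.1 - p.2 ≠ 0 := sub_ne_zero.mpr huv
      have hδpos : 0 < ‖p.1 - p.2‖ := by rw [norm_pos_iff]; exact hxne
      have hd : 0 < ε * ‖p.1 - p.2‖ := mul_pos hε0 hδpos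
      rw [(hint_p p).integral_eq_integral_meas_lt
        (Filter.Eventually.of_forall fun G => le_max_right _ _)]
      have hbound : ∀ s ∈ Set.Ioi (0:ℝ),
          (μ {G | s < max (q p G) 0}).toReal ≤ rexp (-((1 + 2*s) * (ε ^ 2 * t) / 8)) := by
        intro s hs
        have hs0 : (0:ℝ) < s := hs
        have hseteq : {G : Fin t → Fin d → ℝ | s < max (q p G) 0}
            = {G | ‖appJL G (p.1 - p.2)‖ < (1 - (1 + s) * ε) * ‖p.1 - p.2‖} := by
          ext G
          simp only [Set.mem_setOf_eq, lt_max_iff]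
          constructor
          · rintro (h | h)
            · rw [hqdef, lt_div_iff₀ hd] at h
              rw [← appJL_sub]
              nlinarith
            · linarith
          · intro h
            left
            rw [hqdef, lt_div_iff₀ hd]
            rw [← appJL_sub] at h
            nlinarith
        rw [hseteq]
        by_cases hδ1 : (1 + s) * ε < 1
        · have hδ0' : 0 < (1 + s) * ε := by positivity
          refine (jl_tail ht (p.1 - p.2) hxne hδ0' hδ1).trans ?_
          rw [Real.exp_le_exp]
          have hsq : (1 + 2 * s) * (ε ^ 2 * t) ≤ ((1 + s) * ε) ^ 2 * t := by
            nlinarith [sq_nonneg s, htpos.le, mul_nonneg (mul_nonneg (sq_nonneg s) (sq_nonneg ε)) htpos.le]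
          linarith
        · have hempty : {G : Fin t → Fin d → ℝ |
              ‖appJL G (p.1 - p.2)‖ < (1 - (1 + s) * ε) * ‖p.1 - p.2‖} = ∅ := by
            ext G
            simp only [Set.mem_setOf_eq, Set.mem_empty_iff_false, iff_false, not_lt]
            have h1 : (1 : ℝ) - (1 + s) * ε ≤ 0 := by linarith [not_lt.mp hδ1]
            calc (1 - (1 + s) * ε) * ‖p.1 - p.2‖ ≤ 0 :=
                  mul_nonpos_of_nonpos_of_nonneg h1 (norm_nonneg _)
              _ ≤ ‖appJL G (p.1 - p.2)‖ := norm_nonneg _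
          rw [hempty]
          simp only [measure_empty, ENNReal.toReal_zero]
          positivity
      -- compare with the exponential upper bound
      have hgeq : (fun s : ℝ => rexp (-((1 + 2 * s) * (ε ^ 2 * t) / 8)))
          = fun s => rexp (-(ε ^ 2 * t / 8)) * rexp (-(ε ^ 2 * t / 4 * s)) := by
        funext s
        rw [← Real.exp_add]
        congr 1
        ring
      have hgint : IntegrableOn (fun s : ℝ => rexp (-((1 + 2 * s) * (ε ^ 2 * t) / 8)))
          (Set.Ioi 0) := by
        rw [hgeq]
        have h := (exp_neg_integrableOn_Ioi 0
          (show (0:ℝ) < ε ^ 2 * t / 4 by positivity)).const_mul (rexp (-(ε ^ 2 * t / 8)))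
        simpa [neg_mul, IntegrableOn] using h
      have hgval : ∫ s in Set.Ioi (0:ℝ), rexp (-((1 + 2 * s) * (ε ^ 2 * t) / 8))
          = rexp (-(ε ^ 2 * t / 8)) * (4 / (ε ^ 2 * t)) := by
        rw [hgeq, integral_const_mul]
        congr 1
        have hc4 : (0:ℝ) < ε ^ 2 * t / 4 := by positivity
        have h := integral_comp_mul_left_Ioi (fun u => rexp (-u)) 0 hc4
        simp only [mul_zero, smul_eq_mul] at h
        rw [h, integral_exp_neg_Ioi]
        rw [neg_zero, Real.exp_zero, mul_one, inv_div]
      calc ∫ s in Set.Ioi (0:ℝ), (μ {G | s < max (q p G) 0}).toReal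
          ≤ ∫ s in Set.Ioi (0:ℝ), rexp (-((1 + 2 * s) * (ε ^ 2 * t) / 8)) := by
            refine integral_mono_of_nonneg
              (Filter.Eventually.of_forall fun s => ENNReal.toReal_nonneg) hgint ?_
            rw [Filter.EventuallyLE, ae_restrict_iff' measurableSet_Ioi]
            exact Filter.Eventually.of_forall hbound
        _ = rexp (-(ε ^ 2 * t / 8)) * (4 / (ε ^ 2 * t)) := hgval
  -- assemble
  calc ∫ G, ((((N ×ˢ N).sup fun p => Real.toNNReal (q p G)) : ℝ≥0) : ℝ) ∂μ
      ≤ ∫ G, ∑ p ∈ N ×ˢ N, max (q p G) 0 ∂μ :=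
        integral_mono_of_nonneg (Filter.Eventually.of_forall fun G => NNReal.coe_nonneg _)
          (integrable_finset_sum _ fun p _ => hint_p p)
          (Filter.Eventually.of_forall hsup_le)
    _ = ∑ p ∈ N ×ˢ N, ∫ G, max (q p G) 0 ∂μ :=
        integral_finset_sum _ fun p _ => (hint_p p)
    _ ≤ ∑ _p ∈ N ×ˢ N, rexp (-(ε ^ 2 * t / 8)) * (4 / (ε ^ 2 * t)) :=
        Finset.sum_le_sum hpair
    _ = (N.card : ℝ) ^ 2 * (rexp (-(ε ^ 2 * t / 8)) * (4 / (ε ^ 2 * t))) := by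
        rw [Finset.sum_const, Finset.card_product, nsmul_eq_mul]
        push_cast
        ring
    _ ≤ rexp (ε ^ 2 * t / 16) * (rexp (-(ε ^ 2 * t / 8)) * (4 / (ε ^ 2 * t))) :=
        mul_le_mul_of_nonneg_right hN (by positivity)
    _ = (4 / (ε ^ 2 * t)) * rexp (-(ε ^ 2 * t) / 16) := by
        rw [← mul_assoc, ← Real.exp_add]
        rw [mul_comm]
        congr 2
        ring
    _ ≤ (8 / (ε ^ 2 * t)) * rexp (-(ε ^ 2 * t) / 16) := by
        apply mul_le_mul_of_nonneg_right ?_ (Real.exp_pos _).le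
        gcongr
        norm_num
end
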